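/- Let k ≥ 2 and let s_{2k} be the Fibonacci word of order 2k. Then for every i = 0, 1, …, k-2, the word a·x_{2(k-i)}·b has exactly F_{2i} occurrences as a circular factor of s_{2k}, and the word a·x_{2(k-i)-1}·b has exactly F_{2i+1} occurrences as a circular factor of s_{2k} (where the number of occurrences of u as a circular factor of w is the number of positions j ∈ {1,…,|w|} such that u is a prefix of conj_j(w)). -/

import Mathlib

namespace BWT

/-- The two-letter ordered alphabet `{a, b}` with `a < b`, encoded as `Bool` with `a = false`. -/
abbrev Letter := Bool

/-- The letter `a`. -/
abbrev la : Letter := false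

/-- The letter `b`. -/
abbrev lb : Letter := true

/-- A (binary) word. -/
abbrev Word := List Letter

/-- All conjugates (rotations) of a word, listed by rotation amount. -/
def rotations (w : Word) : List Word := (List.range w.length).map w.rotate

/-- A word is primitive if all of its `|w|` conjugates are distinct. -/
def Primitive (w : Word) : Prop := (rotations w).Nodup

/-- The conjugates of `w`, sorted lexicographically. -/
def sortedRotations (w : Word) : List Word := (rotations w).insertionSort (· ≤ ·)

/-- The Burrows–Wheeler transform: last letters of the lexicographically sorted conjugates. -/
def bwt (w : Word) : Word := (sortedRotations w).map (fun u => u.getLastD la)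

/-- Number of maximal equal-letter runs of a word. -/
def runs (w : Word) : ℕ := (w.destutter (· ≠ ·)).length

/-- `r(w)`: the number of runs of the BWT of `w`. -/
def rr (w : Word) : ℕ := runs (bwt w)

/-- The runs-ratio `ρ(w)`. -/
def rho (w : Word) : ℚ :=
  max ((rr w : ℚ) / (rr w.reverse : ℚ)) ((rr w.reverse : ℚ) / (rr w : ℚ))

/-- `n`-th power (concatenation) of a word. -/
def wpow (w : Word) : ℕ → Word
  | 0 => []
  | n + 1 => w ++ wpow w n

/-- Standard words for the directive sequence `d`:
`s 0 = b`, `s 1 = a`, `s (i+2) = (s (i+1))^(d i) · s i`. -/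
def std (d : ℕ → ℕ) : ℕ → Word
  | 0 => [lb]
  | 1 => [la]
  | n + 2 => wpow (std d (n + 1)) (d n) ++ std d n

/-- Fibonacci words: `s 0 = b`, `s 1 = a`, `s (i+2) = s (i+1) · s i`. -/
def fw : ℕ → Word
  | 0 => [lb]
  | 1 => [la]
  | n + 2 => fw (n + 1) ++ fw n

/-- Fibonacci numbers with `F 0 = F 1 = 1`. -/
def fib : ℕ → ℕ
  | 0 => 1
  | 1 => 1
  | n + 2 => fib (n + 1) + fib n

/-- The word `x i`, i.e. the Fibonacci word of order `i` with its last two letters removed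
(so that `s_{2k} = x_{2k}·ab` and `s_{2k+1} = x_{2k+1}·ba`). -/
def x (i : ℕ) : Word := (fw i).take ((fw i).length - 2)

/-- `u` is a circular factor of `w`: a prefix of some conjugate of `w`. -/
def CircFactor (u w : Word) : Prop := ∃ i < w.length, u <+: w.rotate i

/-- A circular factor `u` is left-special in `w` if both `a·u` and `b·u` are circular factors. -/
def LeftSpecial (u w : Word) : Prop := CircFactor (la :: u) w ∧ CircFactor (lb :: u) w

/-- Number of occurrences of `u` as a circular factor of `w`. -/
def occ (u w : Word) : ℕ :=
  ((List.range w.length).filter (fun j => decide (u <+: w.rotate j))).length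

end BWT

namespace BWTAux
open BWT List

lemma fib_pos : ∀ n, 0 < fib n
  | 0 => one_pos
  | 1 => one_pos
  | (n+2) => by have h1 := fib_pos (n+1); have h2 := fib_pos n; simp [fib]; omega

lemma two_le_fib (n) : 2 ≤ fib (n+2) := by
  have h1 := fib_pos (n+1); have h2 := fib_pos n; simp [fib]; omega

lemma fib_le_succ (n) : fib n ≤ fib (n+1) := by
  cases n with
  | zero => simp [fib]
  | succ n => have := fib_pos n; simp [fib]

lemma fib_mono : ∀ {m n : ℕ}, m ≤ n → fib m ≤ fib n := by
  intro m n h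
  induction n with
  | zero => simp_all
  | succ n ih =>
    rcases Nat.eq_or_lt_of_le h with rfl | h'
    · exact le_refl _
    · exact le_trans (ih (by omega)) (fib_le_succ n)

lemma length_fw : ∀ n, (fw n).length = fib n
  | 0 => rfl
  | 1 => rfl
  | (n+2) => by
      have h1 := length_fw (n+1); have h2 := length_fw n
      simp [fw, fib, h1, h2]

def tl (n : ℕ) : Word := if Even n then [la, lb] else [lb, la]

lemma tl_add_two (n) : tl (n+2) = tl n := by
  have : Even (n+2) ↔ Even n := by simp [Nat.even_add_one, Nat.not_even_iff_odd, Nat.odd_add_one]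
  simp [tl, this]

lemma length_tl (n) : (tl n).length = 2 := by
  unfold tl; split <;> rfl

lemma reverse_tl (n) : (tl (n+1)).reverse = tl n := by
  rcases Nat.even_or_odd n with h | h
  · have h' : ¬ Even (n+1) := by simp [Nat.even_add_one, h]
    simp [tl, h, h']
  · have h0 : ¬ Even n := by simpa [Nat.not_even_iff_odd] using h
    have h' : Even (n+1) := by simpa [Nat.even_add_one] using h0
    simp [tl, h0, h']

lemma fw_succ (n) : fw (n+2) = fw (n+1) ++ fw n := rfl

lemma exS : ∀ n, ∃ y : Word, fw (n+2) = y ++ tl n ∧ fw n ++ fw (n+1) = y ++ tl (n+1)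
  | 0 => ⟨[], by decide, by decide⟩
  | (n+1) => by
      obtain ⟨y, h1, h2⟩ := exS n
      refine ⟨fw (n+1) ++ y, ?_, ?_⟩
      · calc fw (n+3) = (fw (n+1) ++ fw n) ++ fw (n+1) := rfl
          _ = fw (n+1) ++ (fw n ++ fw (n+1)) := append_assoc _ _ _
          _ = fw (n+1) ++ (y ++ tl (n+1)) := by rw [h2]
          _ = (fw (n+1) ++ y) ++ tl (n+1) := (append_assoc _ _ _).symm
      · show fw (n+1) ++ fw (n+2) = (fw (n+1) ++ y) ++ tl (n+2)
        calc fw (n+1) ++ fw (n+2) = fw (n+1) ++ (y ++ tl n) := by rw [← h1]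
          _ = (fw (n+1) ++ y) ++ tl (n+2) := by rw [tl_add_two, append_assoc]

lemma fw_eq_x (n) : fw (n+2) = x (n+2) ++ tl n ∧ fw n ++ fw (n+1) = x (n+2) ++ tl (n+1) := by
  obtain ⟨y, h1, h2⟩ := exS n
  have hx : x (n+2) = y := by
    unfold x
    rw [h1, length_append, length_tl, Nat.add_sub_cancel, take_left]
  rw [hx]; exact ⟨h1, h2⟩

lemma fw_eq (n) : fw (n+2) = x (n+2) ++ tl n := (fw_eq_x n).1
lemma fw_swap (n) : fw n ++ fw (n+1) = x (n+2) ++ tl (n+1) := (fw_eq_x n).2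

lemma length_x (n) : (x (n+2)).length = fib (n+2) - 2 := by
  have h := congrArg List.length (fw_eq n)
  rw [length_fw, length_append, length_tl] at h
  omega

lemma R1 (n) : x (n+4) = x (n+3) ++ tl (n+1) ++ x (n+2) := by
  have e1 : fw (n+4) = x (n+4) ++ tl n := by rw [fw_eq (n+2), tl_add_two]
  have e2 : fw (n+4) = ((x (n+3) ++ tl (n+1)) ++ x (n+2)) ++ tl n := by
    calc fw (n+4) = fw (n+3) ++ fw (n+2) := rfl
      _ = (x (n+3) ++ tl (n+1)) ++ (x (n+2) ++ tl n) := by rw [fw_eq (n+1), fw_eq n]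
      _ = ((x (n+3) ++ tl (n+1)) ++ x (n+2)) ++ tl n := by simp [append_assoc]
  have := e1.symm.trans e2
  exact append_cancel_right this

lemma R2 (n) : x (n+4) = x (n+2) ++ tl n ++ x (n+3) := by
  have e1 : fw (n+2) ++ fw (n+3) = x (n+4) ++ tl (n+1) := by
    have := fw_swap (n+2); rwa [tl_add_two] at this
  have e2 : fw (n+2) ++ fw (n+3) = ((x (n+2) ++ tl n) ++ x (n+3)) ++ tl (n+1) := by
    rw [fw_eq n, fw_eq (n+1)]; simp [append_assoc]
  have := e1.symm.trans e2
  exact append_cancel_right this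

lemma x_pal : ∀ n, (x (n+2)).reverse = x (n+2)
  | 0 => by decide
  | 1 => by decide
  | (n+2) => by
      have h1 := x_pal n
      have h2 := x_pal (n+1)
      conv_lhs => rw [R1 n]
      conv_rhs => rw [R2 n]
      simp only [reverse_append, reverse_tl, h1, h2, append_assoc]
def Unbordered (u : Word) : Prop := ∀ v : Word, v <+: u → v <:+ u → v = [] ∨ v = u

lemma prefix_trim {v A B : Word} (h : v <+: A ++ B) (hl : v.length ≤ A.length) : v <+: A := by
  rw [prefix_iff_eq_take] at h ⊢
  rwa [take_append_of_le_length hl] at h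

lemma unbordered_axb {X : Word} (hX : X.reverse = X) : Unbordered (la :: (X ++ [lb])) := by
  intro v hv1 hv2
  rcases eq_or_ne v [] with h | hne0
  · left; exact h
  right
  by_contra hne
  have hul : (la :: (X ++ [lb])).length = X.length + 2 := by simp
  have hlen : v.length < X.length + 2 := by
    rcases Nat.eq_or_lt_of_le hv1.length_le with he | h
    · exact absurd (hv1.eq_of_length he) hne
    · omega
  obtain ⟨c, t, rfl⟩ := exists_cons_of_ne_nil hne0
  rw [cons_prefix_cons] at hv1
  obtain ⟨rfl, ht⟩ := hv1
  have hv2' : (la :: t).reverse <+: (la :: (X ++ [lb])).reverse := reverse_prefix.mpr hv2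
  simp only [reverse_cons, reverse_append, hX] at hv2'
  -- hv2' : t.reverse ++ [la] <+: ([lb] ++ X) ++ [la]  (roughly)
  rcases eq_or_ne t [] with rfl | htne
  · simp [cons_prefix_cons] at hv2'
  obtain ⟨c', s, hs⟩ := exists_cons_of_ne_nil ((not_congr reverse_eq_nil_iff).mpr htne)
  rw [hs] at hv2'
  have hv2'' : c' :: (s ++ [la]) <+: lb :: (X ++ [la]) := by
    simpa [append_assoc] using hv2'
  rw [cons_prefix_cons] at hv2''
  obtain ⟨rfl, hsla⟩ := hv2''
  have ht' : t = s.reverse ++ [lb] := by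
    rw [← reverse_reverse t, hs]; simp
  have htlen : t.length ≤ X.length := by simp at hlen; omega
  have hslen : s.length + 1 ≤ X.length := by
    rw [ht'] at htlen; simpa using htlen
  have h1 : t = X.take (s.length + 1) := by
    have := prefix_iff_eq_take.mp (prefix_trim ht htlen)
    rw [ht'] at this ⊢
    simpa using this
  have h2 : s ++ [la] = X.take (s.length + 1) := by
    have := prefix_iff_eq_take.mp (prefix_trim hsla (by simpa using hslen))
    simpa using this
  have h3 : s.reverse ++ [lb] = s ++ [la] := by rw [← ht', h1, h2]
  have h4 := congrArg List.reverse h3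
  simp at h4
lemma border_of_double {u S : Word} {d : ℕ} (hd0 : 0 < d) (hdn : d < S.length)
    (hn : S.length < 2 * u.length) (h1 : u <+: S) (h2 : u <+: S.rotate d) :
    ∃ v : Word, v <+: u ∧ v <:+ u ∧ v ≠ [] ∧ v ≠ u := by
  have hun : u.length ≤ S.length := h1.length_le
  have hrot : S.rotate d = S.drop d ++ S.take d := rotate_eq_drop_append_take hdn.le
  by_cases hcase : d + u.length ≤ S.length
  · -- non-wrapping case
    have hd_lt_u : d < u.length := by omega
    have hu2 : u <+: S.drop d := by
      rw [prefix_iff_eq_take] at h2 ⊢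
      rwa [hrot, take_append_of_le_length (by rw [length_drop]; omega)] at h2
    obtain ⟨w', hw'⟩ := h1
    refine ⟨u.drop d, ?_, drop_suffix _ _, ?_, ?_⟩
    · have hS : S.drop d = u.drop d ++ w' := by
        rw [← hw', drop_append, (by omega : d - u.length = 0), drop_zero]
      rw [prefix_iff_eq_take] at hu2
      have h3 := congrArg (List.take (u.length - d)) hu2
      rw [take_take, min_eq_left (by omega), hS,
        take_append_of_le_length (by rw [length_drop])] at h3
      have h4 : (u.drop d).take (u.length - d) = u.drop d :=
        take_of_length_le (by rw [length_drop])
      rw [h4] at h3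
      rw [← h3]
      exact take_prefix _ _
    · intro h
      have := congrArg List.length h
      rw [length_drop] at this
      simp at this; omega
    · intro h
      have := congrArg List.length h
      rw [length_drop] at this; omega
  · -- wrapping case
    set e := d + u.length - S.length with he
    have he1 : 1 ≤ e := by omega
    have heu : e < u.length := by omega
    have hed : e ≤ d := by omega
    have hu : u = S.drop d ++ S.take e := by
      rw [prefix_iff_eq_take] at h2
      rw [hrot, take_append, length_drop] at h2
      rw [h2]; congr 1
      · exact take_of_length_le (by rw [length_drop]; omega)
      · have hE : u.length - (S.length - d) = e := by omega
        rw [hE, take_take, min_eq_left hed]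
    have hCT : u.drop (u.length - e) = S.take e := by
      have hl : u.length - e = (S.drop d).length := by rw [length_drop]; omega
      rw [hl]
      conv_lhs => rw [hu]
      rw [drop_left]
    have hT : u.take e = S.take e := by
      conv_lhs => rw [prefix_iff_eq_take.mp h1]
      rw [take_take, min_eq_left (by omega)]
    refine ⟨u.take e, take_prefix _ _, ?_, ?_, ?_⟩
    · rw [hT, ← hCT]; exact drop_suffix _ _
    · intro h
      have := congrArg List.length h
      rw [length_take, min_eq_left heu.le] at this
      simp at this; omega
    · intro h
      have := congrArg List.length h
      rw [length_take, min_eq_left heu.le] at this; omega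

lemma unique_pos {u w : Word} (hub : Unbordered u) (h2 : w.length < 2 * u.length)
    {i j : ℕ} (hi : i < w.length) (hj : j < w.length)
    (hpi : u <+: w.rotate i) (hpj : u <+: w.rotate j) : i = j := by
  have key : ∀ i j, i < w.length → j < w.length → i ≤ j →
      u <+: w.rotate i → u <+: w.rotate j → i = j := by
    intro i j hi hj hij hpi hpj
    by_contra hne
    have hd0 : 0 < j - i := by omega
    have hrot : (w.rotate i).rotate (j - i) = w.rotate j := by
      rw [rotate_rotate]; congr 1; omega
    have hlen : (w.rotate i).length = w.length := length_rotate _ _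
    obtain ⟨v, hv1, hv2, hv3, hv4⟩ := border_of_double (u := u) (S := w.rotate i) (d := j - i)
      hd0 (by omega) (by omega) hpi (by rw [hrot]; exact hpj)
    rcases hub v hv1 hv2 with h | h
    · exact hv3 h
    · exact hv4 h
  rcases le_total i j with hij | hij
  · exact key i j hi hj hij hpi hpj
  · exact (key j i hj hi hij hpj hpi).symm
lemma occ_eq_one {u w : Word} (hub : Unbordered u) (h2 : w.length < 2 * u.length)
    (hex : ∃ j, j < w.length ∧ u <+: w.rotate j) : occ u w = 1 := by
  obtain ⟨j0, hj0, hp0⟩ := hex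
  unfold occ
  rw [← countP_eq_length_filter]
  have hcc : countP (fun j => decide (u <+: w.rotate j)) (range w.length)
      = countP (fun j => j == j0) (range w.length) := by
    refine countP_congr ?_
    intro j hj
    rw [mem_range] at hj
    simp only [decide_eq_true_eq, beq_iff_eq]
    constructor
    · intro h; exact unique_pos hub h2 hj hj0 h hp0
    · rintro rfl; exact hp0
  rw [hcc]
  have : countP (fun j => j == j0) (range w.length) = (range w.length).count j0 := rfl
  rw [this]
  exact count_eq_one_of_mem nodup_range (mem_range.mpr hj0)

lemma rotate_snoc (y : Word) (c : Letter) : (y ++ [c]).rotate y.length = c :: y := by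
  rw [rotate_eq_drop_append_take (by simp), drop_left, take_left]
  rfl

lemma rotate_mid (y C : Word) (c : Letter) :
    ((y ++ [c]) ++ C).rotate y.length = c :: (C ++ y) := by
  rw [append_assoc]
  rw [rotate_eq_drop_append_take (by simp), drop_left, take_left]
  simp

lemma fw_prefix_le : ∀ a b : ℕ, 1 ≤ a → a ≤ b → fw a <+: fw b := by
  intro a b ha hab
  induction b with
  | zero => exact absurd hab (by omega)
  | succ b ih =>
    rcases Nat.eq_or_lt_of_le hab with rfl | h
    · exact prefix_refl _
    · have hab' : a ≤ b := by omega
      refine (ih hab').trans ?_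
      obtain ⟨c, rfl⟩ : ∃ c, b = c + 1 := ⟨b - 1, by omega⟩
      exact ⟨fw c, rfl⟩

lemma take_fw_eq {a b k : ℕ} (ha : 1 ≤ a) (hab : a ≤ b) (hk : k ≤ fib a) :
    (fw b).take k = (fw a).take k := by
  obtain ⟨z, hz⟩ := fw_prefix_le a b ha hab
  rw [← hz, take_append_of_le_length (by rw [length_fw]; exact hk)]

lemma tl_even {n : ℕ} (h : Even n) : tl n = [la, lb] := if_pos h
lemma tl_odd {n : ℕ} (h : ¬ Even n) : tl n = [lb, la] := if_neg h

lemma even2 (p : ℕ) : Even (2*p) := ⟨p, by omega⟩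
lemma odd2 (p : ℕ) : ¬ Even (2*p+1) := by simp [Nat.even_add_one, even2 p]

-- u_m as an exact rotation of fw m, odd case m = 2p+3
lemma ex_odd1 (p : ℕ) :
    la :: (x (2*p+3) ++ [lb]) = (fw (2*p+3)).rotate (fib (2*p+3) - 2 + 1) := by
  have h1 : fw (2*p+3) = (x (2*p+3) ++ [lb]) ++ [la] := by
    have := fw_eq (2*p+1)
    rw [tl_odd (odd2 p)] at this
    rw [show (2:ℕ)*p+3 = 2*p+1+2 by omega, this]
    simp
  have h2 : (x (2*p+3) ++ [lb]).length = fib (2*p+3) - 2 + 1 := by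
    rw [length_append, show (2:ℕ)*p+3 = 2*p+1+2 by omega, length_x]
    simp
  rw [h1, ← h2, rotate_snoc]

-- even case m = 2p+4 : u_m = rotate (fib (2p+3) - 2 + 1) (fw (2p+4))
lemma x_even_dec (p : ℕ) : x (2*p+4) = fw (2*p+2) ++ x (2*p+3) := by
  have h1 := R2 (2*p)
  rw [tl_even (even2 p)] at h1
  have h2 := fw_eq (2*p)
  rw [tl_even (even2 p)] at h2
  rw [show (2:ℕ)*p+4 = 2*p+0+4 by omega] at *
  rw [h1, h2, show (2:ℕ)*p+2 = 2*p+0+2 by omega, append_assoc]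

lemma ex_even1 (p : ℕ) :
    la :: (x (2*p+4) ++ [lb]) = (fw (2*p+4)).rotate (fib (2*p+3) - 2 + 1) := by
  have h1 : fw (2*p+4) = ((x (2*p+3) ++ [lb]) ++ [la]) ++ fw (2*p+2) := by
    have e : fw (2*p+3) = x (2*p+3) ++ [lb, la] := by
      have := fw_eq (2*p+1)
      rw [tl_odd (odd2 p)] at this
      rw [show (2:ℕ)*p+3 = 2*p+1+2 by omega]; exact this
    calc fw (2*p+4) = fw (2*p+3) ++ fw (2*p+2) := rfl
      _ = _ := by rw [e]; simp
  have h2 : (x (2*p+3) ++ [lb]).length = fib (2*p+3) - 2 + 1 := by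
    rw [length_append, show (2:ℕ)*p+3 = 2*p+1+2 by omega, length_x]
    simp
  rw [h1, ← h2, rotate_mid, x_even_dec]
  simp [append_assoc]
lemma fib_rec (n) : fib (n+2) = fib (n+1) + fib n := rfl

lemma ex_even2 (p : ℕ) :
    la :: (x (2*p+4) ++ [lb]) <+: (fw (2*p+5)).rotate (fib (2*p+3) - 2 + 1) := by
  have e : fw (2*p+3) = x (2*p+3) ++ [lb, la] := by
    have := fw_eq (2*p+1)
    rw [tl_odd (odd2 p)] at this
    rw [show (2:ℕ)*p+3 = 2*p+1+2 by omega]; exact this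
  have h1 : fw (2*p+5) = ((x (2*p+3) ++ [lb]) ++ [la]) ++ (fw (2*p+2) ++ fw (2*p+3)) := by
    calc fw (2*p+5) = (fw (2*p+3) ++ fw (2*p+2)) ++ fw (2*p+3) := rfl
      _ = _ := by rw [e]; simp [append_assoc]
  have h2 : (x (2*p+3) ++ [lb]).length = fib (2*p+3) - 2 + 1 := by
    rw [length_append, show (2:ℕ)*p+3 = 2*p+1+2 by omega, length_x]
    simp
  rw [h1, ← h2, rotate_mid]
  rw [cons_prefix_cons]
  refine ⟨rfl, ?_⟩
  rw [x_even_dec, append_assoc, append_assoc]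
  rw [prefix_append_right_inj]
  have hy : (x (2*p+3) ++ [lb]) <+: fw (2*p+3) := by
    rw [e]; exact ⟨[la], by simp⟩
  exact hy.trans (prefix_append _ _)

lemma ex_odd2 (p : ℕ) :
    la :: (x (2*p+5) ++ [lb]) <+: (fw (2*p+6)).rotate (fib (2*p+5) - 2 + 1) := by
  have e5 : fw (2*p+5) = x (2*p+5) ++ [lb, la] := by
    have := fw_eq (2*p+3)
    rw [tl_odd (by simp only [Nat.even_iff]; omega : ¬ Even (2*p+3))] at this
    rw [show (2:ℕ)*p+5 = 2*p+3+2 by omega]; exact this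
  have e4 : fw (2*p+4) = x (2*p+4) ++ [la, lb] := by
    have := fw_eq (2*p+2)
    rw [tl_even (by simp only [Nat.even_iff]; omega : Even (2*p+2))] at this
    rw [show (2:ℕ)*p+4 = 2*p+2+2 by omega]; exact this
  have F1 : x (2*p+5) = fw (2*p+4) ++ x (2*p+3) := by
    have h := R1 (2*p+1)
    rw [show (2:ℕ)*p+1+4 = 2*p+5 by omega, show (2:ℕ)*p+1+3 = 2*p+4 by omega,
      show (2:ℕ)*p+1+2 = 2*p+3 by omega, show (2:ℕ)*p+1+1 = 2*p+2 by omega,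
      tl_even (by simp only [Nat.even_iff]; omega : Even (2*p+2))] at h
    rw [h, e4, append_assoc]
  have F2 : x (2*p+3) ++ [lb] <+: x (2*p+4) := by
    have h := R1 (2*p)
    rw [show (2:ℕ)*p+4 = 2*p+0+4 by omega, show (2:ℕ)*p+0+3 = 2*p+3 by omega,
      show (2:ℕ)*p+0+2 = 2*p+2 by omega, show (2:ℕ)*p+0+1 = 2*p+1 by omega,
      tl_odd (odd2 p)] at h
    rw [show (2:ℕ)*p+0+4 = 2*p+4 by omega] at h
    rw [h]
    refine ⟨[la] ++ x (2*p+2), ?_⟩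
    simp [append_assoc]
  have F3 : x (2*p+4) <+: x (2*p+5) := by
    rw [F1, e4, append_assoc]; exact prefix_append _ _
  have h1 : fw (2*p+6) = ((x (2*p+5) ++ [lb]) ++ [la]) ++ fw (2*p+4) := by
    calc fw (2*p+6) = fw (2*p+5) ++ fw (2*p+4) := rfl
      _ = _ := by rw [e5]; simp [append_assoc]
  have h2 : (x (2*p+5) ++ [lb]).length = fib (2*p+5) - 2 + 1 := by
    rw [length_append, show (2:ℕ)*p+5 = 2*p+3+2 by omega, length_x]
    simp
  rw [h1, ← h2, rotate_mid, cons_prefix_cons]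
  refine ⟨rfl, ?_⟩
  -- goal : x (2p+5) ++ [lb] <+: fw (2p+4) ++ (x (2p+5) ++ [lb])
  have key : x (2*p+5) ++ [lb] = fw (2*p+4) ++ (x (2*p+3) ++ [lb]) := by
    rw [F1, append_assoc]
  conv_lhs => rw [key]
  rw [prefix_append_right_inj]
  exact ((F2.trans F3).trans (prefix_append _ _))

lemma u_len (n : ℕ) : (la :: (x (n+2) ++ [lb])).length = fib (n+2) := by
  have h := two_le_fib n
  simp [length_x]
  omega

lemma unb (n : ℕ) : Unbordered (la :: (x (n+2) ++ [lb])) := unbordered_axb (x_pal n)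

lemma base1 (m : ℕ) (hm : 3 ≤ m) : occ (la :: (x m ++ [lb])) (fw m) = 1 := by
  rcases Nat.even_or_odd m with hpar | hpar
  · obtain ⟨p, rfl⟩ : ∃ p, m = 2*p+4 := by
      obtain ⟨r, hr⟩ := hpar; exact ⟨(m-4)/2, by omega⟩
    have hul : (la :: (x (2*p+4) ++ [lb])).length = fib (2*p+4) := by
      have := u_len (2*p+2); rwa [show (2:ℕ)*p+2+2 = 2*p+4 by omega] at this
    refine occ_eq_one ?_ ?_ ?_
    · have := unb (2*p+2); rwa [show (2:ℕ)*p+2+2 = 2*p+4 by omega] at this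
    · rw [length_fw, hul]; have := fib_pos (2*p+4); omega
    · refine ⟨fib (2*p+3) - 2 + 1, ?_, ?_⟩
      · rw [length_fw]
        have h1 := two_le_fib (2*p+1)
        rw [show (2:ℕ)*p+1+2 = 2*p+3 by omega] at h1
        have h2 := fib_rec (2*p+2)
        rw [show (2:ℕ)*p+2+2 = 2*p+4 by omega, show (2:ℕ)*p+2+1 = 2*p+3 by omega] at h2
        have h3 := fib_pos (2*p+2)
        omega
      · rw [← ex_even1]
  · obtain ⟨p, rfl⟩ : ∃ p, m = 2*p+3 := by
      obtain ⟨r, hr⟩ := hpar; exact ⟨(m-3)/2, by omega⟩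
    have hul : (la :: (x (2*p+3) ++ [lb])).length = fib (2*p+3) := by
      have := u_len (2*p+1); rwa [show (2:ℕ)*p+1+2 = 2*p+3 by omega] at this
    refine occ_eq_one ?_ ?_ ?_
    · have := unb (2*p+1); rwa [show (2:ℕ)*p+1+2 = 2*p+3 by omega] at this
    · rw [length_fw, hul]; have := fib_pos (2*p+3); omega
    · refine ⟨fib (2*p+3) - 2 + 1, ?_, ?_⟩
      · rw [length_fw]
        have h1 := two_le_fib (2*p+1)
        rw [show (2:ℕ)*p+1+2 = 2*p+3 by omega] at h1
        omega
      · rw [← ex_odd1]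

lemma base2 (m : ℕ) (hm : 3 ≤ m) : occ (la :: (x m ++ [lb])) (fw (m+1)) = 1 := by
  rcases Nat.even_or_odd m with hpar | hpar
  · obtain ⟨p, rfl⟩ : ∃ p, m = 2*p+4 := by
      obtain ⟨r, hr⟩ := hpar; exact ⟨(m-4)/2, by omega⟩
    have hul : (la :: (x (2*p+4) ++ [lb])).length = fib (2*p+4) := by
      have := u_len (2*p+2); rwa [show (2:ℕ)*p+2+2 = 2*p+4 by omega] at this
    have h4 := fib_rec (2*p+2)
    rw [show (2:ℕ)*p+2+2 = 2*p+4 by omega, show (2:ℕ)*p+2+1 = 2*p+3 by omega] at h4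
    have h5 := fib_rec (2*p+3)
    rw [show (2:ℕ)*p+3+2 = 2*p+5 by omega, show (2:ℕ)*p+3+1 = 2*p+4 by omega] at h5
    have h3 := fib_pos (2*p+2)
    have h6 := fib_pos (2*p+3)
    have h1 := two_le_fib (2*p+1)
    rw [show (2:ℕ)*p+1+2 = 2*p+3 by omega] at h1
    refine occ_eq_one ?_ ?_ ?_
    · have := unb (2*p+2); rwa [show (2:ℕ)*p+2+2 = 2*p+4 by omega] at this
    · rw [show (2:ℕ)*p+4+1 = 2*p+5 by omega, length_fw, hul]; omega
    · refine ⟨fib (2*p+3) - 2 + 1, ?_, ?_⟩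
      · rw [show (2:ℕ)*p+4+1 = 2*p+5 by omega, length_fw]; omega
      · rw [show (2:ℕ)*p+4+1 = 2*p+5 by omega]; exact ex_even2 p
  · rcases Nat.lt_or_ge m 5 with h5 | h5
    · obtain rfl : m = 3 := by obtain ⟨r, hr⟩ := hpar; omega
      decide
    · obtain ⟨p, rfl⟩ : ∃ p, m = 2*p+5 := by
        obtain ⟨r, hr⟩ := hpar; exact ⟨(m-5)/2, by omega⟩
      have hul : (la :: (x (2*p+5) ++ [lb])).length = fib (2*p+5) := by
        have := u_len (2*p+3); rwa [show (2:ℕ)*p+3+2 = 2*p+5 by omega] at this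
      have h4 := fib_rec (2*p+3)
      rw [show (2:ℕ)*p+3+2 = 2*p+5 by omega, show (2:ℕ)*p+3+1 = 2*p+4 by omega] at h4
      have h5' := fib_rec (2*p+4)
      rw [show (2:ℕ)*p+4+2 = 2*p+6 by omega, show (2:ℕ)*p+4+1 = 2*p+5 by omega] at h5'
      have h3 := fib_pos (2*p+3)
      have h6 := fib_pos (2*p+4)
      have h1 := two_le_fib (2*p+3)
      rw [show (2:ℕ)*p+3+2 = 2*p+5 by omega] at h1
      refine occ_eq_one ?_ ?_ ?_
      · have := unb (2*p+3); rwa [show (2:ℕ)*p+3+2 = 2*p+5 by omega] at this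
      · rw [show (2:ℕ)*p+5+1 = 2*p+6 by omega, length_fw, hul]; omega
      · refine ⟨fib (2*p+5) - 2 + 1, ?_, ?_⟩
        · rw [show (2:ℕ)*p+5+1 = 2*p+6 by omega, length_fw]; omega
        · rw [show (2:ℕ)*p+5+1 = 2*p+6 by omega]; exact ex_odd2 p
lemma take_rotate_append_left {u A B : Word} (hA : u.length ≤ A.length) (hB : u.length ≤ B.length)
    (hpre : A.take (u.length - 1) = B.take (u.length - 1)) {j : ℕ} (hj : j < A.length) :
    ((A ++ B).rotate j).take u.length = (A.rotate j).take u.length := by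
  have h1 : (A ++ B).rotate j = A.drop j ++ (B ++ A.take j) := by
    rw [rotate_eq_drop_append_take (by rw [length_append]; omega),
      drop_append, take_append_of_le_length hj.le,
      (by omega : j - A.length = 0), drop_zero, append_assoc]
  have h2 : A.rotate j = A.drop j ++ A.take j := rotate_eq_drop_append_take hj.le
  rw [h1, h2]
  conv_lhs => rw [take_append]
  conv_rhs => rw [take_append]
  rw [length_drop]
  set k := u.length - (A.length - j) with hk
  have tail : (B ++ A.take j).take k = (A.take j).take k := by
    rw [take_append, (by omega : k - B.length = 0), take_zero, append_nil,
      take_take, min_eq_left (by omega : k ≤ j)]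
    rw [show B.take k = (B.take (u.length - 1)).take k by
        rw [take_take, min_eq_left (by omega : k ≤ u.length - 1)],
      show A.take k = (A.take (u.length - 1)).take k by
        rw [take_take, min_eq_left (by omega : k ≤ u.length - 1)], hpre]
  rw [tail]

lemma take_rotate_append_right {u A B : Word} (hA : u.length ≤ A.length) (hB : u.length ≤ B.length)
    (hpre : A.take (u.length - 1) = B.take (u.length - 1)) {j : ℕ} (hj : j < B.length) :
    ((A ++ B).rotate (A.length + j)).take u.length = (B.rotate j).take u.length := by
  have h1 : (A ++ B).rotate (A.length + j) = B.drop j ++ (A ++ B.take j) := by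
    rw [rotate_eq_drop_append_take (by rw [length_append]; omega),
      drop_append, take_append,
      (by omega : A.length + j - A.length = j),
      drop_eq_nil_of_le (by omega : A.length ≤ A.length + j),
      take_of_length_le (by omega : A.length ≤ A.length + j), nil_append]
  have h2 : B.rotate j = B.drop j ++ B.take j := rotate_eq_drop_append_take hj.le
  rw [h1, h2]
  conv_lhs => rw [take_append]
  conv_rhs => rw [take_append]
  rw [length_drop]
  set k := u.length - (B.length - j) with hk
  have tail : (A ++ B.take j).take k = (B.take j).take k := by
    rw [take_append, (by omega : k - A.length = 0), take_zero, append_nil,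
      take_take, min_eq_left (by omega : k ≤ j)]
    rw [show B.take k = (B.take (u.length - 1)).take k by
        rw [take_take, min_eq_left (by omega : k ≤ u.length - 1)],
      show A.take k = (A.take (u.length - 1)).take k by
        rw [take_take, min_eq_left (by omega : k ≤ u.length - 1)], hpre]
  rw [tail]

lemma occ_append {u A B : Word} (hA : u.length ≤ A.length) (hB : u.length ≤ B.length)
    (hpre : A.take (u.length - 1) = B.take (u.length - 1)) :
    occ u (A ++ B) = occ u A + occ u B := by
  unfold occ
  rw [← countP_eq_length_filter, ← countP_eq_length_filter, ← countP_eq_length_filter,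
    length_append, range_add, countP_append, countP_map]
  congr 1
  · refine countP_congr ?_
    intro j hj
    rw [mem_range] at hj
    simp only [decide_eq_true_eq]
    rw [prefix_iff_eq_take, prefix_iff_eq_take,
      take_rotate_append_left hA hB hpre hj]
  · refine countP_congr ?_
    intro j hj
    rw [mem_range] at hj
    simp only [Function.comp, decide_eq_true_eq]
    rw [prefix_iff_eq_take, prefix_iff_eq_take,
      take_rotate_append_right hA hB hpre hj]

lemma main (m : ℕ) (hm : 3 ≤ m) : ∀ t, occ (la :: (x m ++ [lb])) (fw (m + t)) = fib t := by
  have hul : (la :: (x m ++ [lb])).length = fib m := by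
    obtain ⟨n, rfl⟩ : ∃ n, m = n + 2 := ⟨m - 2, by omega⟩
    exact u_len n
  intro t
  induction t using Nat.strong_induction_on with
  | _ t ih =>
    match t with
    | 0 => simpa [fib] using base1 m hm
    | 1 => simpa [fib] using base2 m hm
    | (t+2) =>
      have h1 := ih (t+1) (by omega)
      have h2 := ih t (by omega)
      rw [show m + (t+1) = m + t + 1 by omega] at h1
      have hfw : fw (m + (t+2)) = fw (m + t + 1) ++ fw (m + t) := by
        rw [show m + (t+2) = (m+t) + 2 by omega]
        rfl
      have hmt : fib m ≤ fib (m + t) := fib_mono (by omega)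
      have hmt1 : fib m ≤ fib (m + t + 1) := fib_mono (by omega)
      rw [hfw, occ_append ?_ ?_ ?_]
      · rw [h1, h2]; exact (fib_rec t).symm
      · rw [hul, length_fw]; exact hmt1
      · rw [hul, length_fw]; exact hmt
      · rw [hul]
        exact take_fw_eq (by omega : 1 ≤ m + t) (by omega : m + t ≤ m + t + 1) (by omega)
end BWTAux


open BWT in
/-- for `k ≥ 2` and `0 ≤ i ≤ k-2`, the word `a·x_{2(k-i)}·b` has exactly `F_{2i}`
occurrences as a circular factor of `s_{2k}`, and `a·x_{2(k-i)-1}·b` has exactly `F_{2i+1}`. -/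
theorem stmt9 (k : ℕ) (hk : 2 ≤ k) (i : ℕ) (hi : i ≤ k - 2) :
    occ (la :: (x (2*(k-i)) ++ [lb])) (fw (2*k)) = fib (2*i) ∧
    occ (la :: (x (2*(k-i)-1) ++ [lb])) (fw (2*k)) = fib (2*i+1) := by
  constructor
  · have h := BWTAux.main (2*(k-i)) (by omega) (2*i)
    rwa [show 2*(k-i) + 2*i = 2*k by omega] at h
  · have h := BWTAux.main (2*(k-i)-1) (by omega) (2*i+1)
    rwa [show 2*(k-i)-1 + (2*i+1) = 2*k by omega] at h
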